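/- Flow decomposition on a DAG: any nonnegative integer flow on a finite directed acyclic graph with a single source of supply k and sinks absorbing total k decomposes into k directed paths from the source to sinks, such that the number of paths using any edge e is at most f(e). -/

import Mathlib

set_option linter.unusedSectionVars false

/-- Net inflow at vertex `v` for a flow `f` on a finite directed graph. -/
def netInflow {V : Type*} [Fintype V] (f : V → V → ℕ) (v : V) : ℤ :=
  (∑ u, (f u v : ℤ)) - ∑ w, (f v w : ℤ)

section
variable {V : Type*} [Fintype V] [DecidableEq V] {E : V → V → Prop} [DecidableRel E]

private lemma chain_transGen {a : V} {l : List V} (h : List.Chain E a l) :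
    ∀ b ∈ l, Relation.TransGen E a b := by
  induction l generalizing a with
  | nil => simp
  | cons c t ih =>
    rcases List.chain_cons.mp h with ⟨hac, hct⟩
    intro b hb
    rcases List.mem_cons.mp hb with rfl | hb
    · exact Relation.TransGen.single hac
    · exact (Relation.TransGen.single hac).trans (ih hct b hb)

private lemma chain'_nodup (hacyc : ∀ v, ¬ Relation.TransGen E v v)
    (l : List V) : l.Chain' E → l.Nodup := by
  induction l with
  | nil => simp
  | cons a t ih =>
    intro hl
    have h : List.Chain E a t := hl
    exact List.nodup_cons.mpr ⟨fun ha => hacyc a (chain_transGen h a ha),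
      ih (List.isChain_cons.mp hl).2⟩

private lemma exists_walk (hacyc : ∀ v, ¬ Relation.TransGen E v v)
    (f : V → V → ℕ) (hsupp : ∀ u v, ¬ E u v → f u v = 0) (v : V) :
    ∃ p : List V, p.head? = some v ∧ p.Chain' E ∧
      (∀ pr ∈ p.zip p.tail, 0 < f pr.1 pr.2) ∧
      ∃ w, p.getLast? = some w ∧ ∀ u, f w u = 0 := by
  have h1 : IsTrans V (fun a b : V => Relation.TransGen E b a) := ⟨fun a b c h1 h2 => h2.trans h1⟩
  have h2 : IsIrrefl V (fun a b : V => Relation.TransGen E b a) := ⟨fun a h => hacyc a h⟩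
  have wf : WellFounded (fun a b : V => Relation.TransGen E b a) :=
    Finite.wellFounded_of_trans_of_irrefl _
  induction v using WellFounded.induction wf with
  | _ v ih =>
    by_cases h : ∃ u, 0 < f v u
    · obtain ⟨u, hu⟩ := h
      have hE : E v u := by by_contra hE; simp [hsupp v u hE] at hu
      obtain ⟨p, hh, hc, hz, w, hl, hw⟩ := ih u (Relation.TransGen.single hE)
      match p, hh with
      | q :: t, hh =>
        have hq : q = u := by simpa using hh
        subst hq
        refine ⟨v :: q :: t, rfl, List.isChain_cons_cons.mpr ⟨hE, hc⟩, ?_, w, ?_, hw⟩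
        · intro pr hpr
          rw [show (v :: q :: t).zip (v :: q :: t).tail = (v, q) :: ((q :: t).zip t) from rfl]
            at hpr
          rcases List.mem_cons.mp hpr with rfl | hpr
          · exact hu
          · exact hz pr hpr
        · rw [List.getLast?_cons_cons]; exact hl
    · push_neg at h
      exact ⟨[v], rfl, List.isChain_singleton v, by simp, v, rfl, fun u => Nat.le_zero.mp (h u)⟩

private lemma zip_tail_eq (p : List V) : p.zip p.tail = p.dropLast.zip p.tail := by
  induction p with
  | nil => rfl
  | cons a q ih =>
    cases q with
    | nil => rfl
    | cons b t =>
      show ((a :: b :: t).zip (b :: t)) = ((a :: (b :: t).dropLast).zip (b :: t))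
      rw [List.zip_cons_cons, List.zip_cons_cons]
      exact congrArg (List.cons (a, b)) ih

private lemma last_edge : ∀ (q : List V) (b x : V), q.getLast? = some b →
    ∃ c, (c, b) ∈ (x :: q).zip q := by
  intro q
  induction q with
  | nil => intro b x h; simp at h
  | cons y t ih =>
    intro b x h
    cases t with
    | nil =>
      simp only [List.getLast?_singleton, Option.some.injEq] at h
      subst h
      exact ⟨x, by simp⟩
    | cons y' t' =>
      rw [List.getLast?_cons_cons] at h
      obtain ⟨c, hc⟩ := ih b y h
      exact ⟨c, by rw [List.zip_cons_cons]; exact List.mem_cons_of_mem _ hc⟩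

private lemma count_eq_ite {α : Type*} [BEq α] [LawfulBEq α] [DecidableEq α] {l : List α}
    (h : l.Nodup) (a : α) : l.count a = if a ∈ l then 1 else 0 := by
  induction l with
  | nil => simp
  | cons b t ih =>
    rcases List.nodup_cons.mp h with ⟨hb, ht⟩
    by_cases hab : a = b
    · subst hab
      simp [List.count_cons, ih ht, hb]
    · simp [List.count_cons, hab, Ne.symm hab, ih ht]

private lemma mainAux (hacyc : ∀ v, ¬ Relation.TransGen E v v)
    (v₀ : V) (snk : Finset V) (hv₀ : v₀ ∉ snk) :
    ∀ (k : ℕ) (f : V → V → ℕ) (d : V → ℕ),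
      (∀ u v, ¬ E u v → f u v = 0) →
      netInflow f v₀ = -(k : ℤ) →
      (∀ w ∈ snk, netInflow f w = (d w : ℤ)) →
      (∑ w ∈ snk, d w = k) →
      (∀ v, v ≠ v₀ → v ∉ snk → netInflow f v = 0) →
      ∃ P : Fin k → List V,
        (∀ i, (P i).Chain' E) ∧
        (∀ i, (P i).head? = some v₀) ∧
        (∀ i, ∃ w ∈ snk, (P i).getLast? = some w) ∧
        (∀ w ∈ snk, (Finset.univ.filter fun i => (P i).getLast? = some w).card = d w) ∧
        (∀ u v, (∑ i, ((P i).zip (P i).tail).count (u, v)) ≤ f u v) := by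
  intro k
  induction k with
  | zero =>
    intro f d hsupp hsrc hsnk htot hzero
    refine ⟨fun _ => [], fun i => i.elim0, fun i => i.elim0, fun i => i.elim0, ?_, ?_⟩
    · intro w hw
      have h0 : d w = 0 := by
        have := (Finset.sum_eq_zero_iff.mp htot) w hw
        exact this
      simp [h0]
    · intro u v; simp
  | succ k ih =>
    intro f d hsupp hsrc hsnk htot hzero
    -- positive outflow at v₀
    have hA : (0:ℤ) ≤ ∑ u, (f u v₀ : ℤ) := Finset.sum_nonneg fun _ _ => by positivity
    have hB : (0:ℤ) < ∑ u, (f v₀ u : ℤ) := by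
      have hs := hsrc
      unfold netInflow at hs
      have hk : (0:ℤ) ≤ (k:ℤ) := Int.natCast_nonneg k
      push_cast at hs
      linarith
    obtain ⟨p, hh, hc, hz, w, hl, hw⟩ := exists_walk hacyc f hsupp v₀
    have hnd : p.Nodup := chain'_nodup hacyc p hc
    have hwv₀ : w ≠ v₀ := by
      rintro rfl
      have h0 : ∑ u, (f w u : ℤ) = 0 := by simp [hw]
      rw [h0] at hB
      exact lt_irrefl _ hB
    obtain ⟨q, rfl⟩ : ∃ q, p = v₀ :: q := by
      cases p with
      | nil => simp at hh
      | cons a q =>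
        have : a = v₀ := by simpa using hh
        exact ⟨q, by rw [this]⟩
    cases q with
    | nil =>
      exfalso
      apply hwv₀
      simpa using hl.symm
    | cons y t =>
      have hlq : (y :: t).getLast? = some w := by
        rw [List.getLast?_cons_cons] at hl; exact hl
      obtain ⟨a, haz⟩ := last_edge (y :: t) w v₀ hlq
      set z : List (V × V) := (v₀ :: y :: t).zip (y :: t) with hzdef
      have haz' : (a, w) ∈ z := haz
      have hzd : z = (v₀ :: y :: t).dropLast.zip (y :: t) := zip_tail_eq (v₀ :: y :: t)
      have hfst : z.map Prod.fst = (v₀ :: y :: t).dropLast := by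
        rw [hzd]
        exact List.map_fst_zip (le_of_eq (by simp))
      have hsnd : z.map Prod.snd = y :: t := List.map_snd_zip (by simp)
      have hdl : (v₀ :: y :: t).dropLast.Nodup :=
        (List.dropLast_sublist _).nodup hnd
      have htl : (y :: t).Nodup := (List.nodup_cons.mp hnd).2
      have hzn : z.Nodup := List.Nodup.of_map Prod.fst (hfst ▸ hdl)
      -- memberships
      have hv₀tail : v₀ ∉ (y :: t) := (List.nodup_cons.mp hnd).1
      have hv₀dl : v₀ ∈ (v₀ :: y :: t).dropLast := by
        have hm : ((v₀, y) : V × V) ∈ z := by rw [hzdef, List.zip_cons_cons]; exact List.mem_cons_self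
        have := List.mem_map_of_mem (f := Prod.fst) hm
        rwa [hfst] at this
      have hwtail : w ∈ (y :: t) := by
        have := List.mem_map_of_mem (f := Prod.snd) haz'
        rwa [hsnd] at this
      have hpne : (v₀ :: y :: t) ≠ [] := by simp
      have hsplit : (v₀ :: y :: t).dropLast ++ [w] = v₀ :: y :: t := by
        have hgl : (v₀ :: y :: t).getLast hpne = w := by
          have := List.getLast?_eq_getLast hpne
          rw [this] at hl
          exact (Option.some.injEq _ _).mp hl
        rw [← hgl]
        exact List.dropLast_append_getLast hpne
      have hwdl : w ∉ (v₀ :: y :: t).dropLast := by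
        intro hmem
        have hnd2 : ((v₀ :: y :: t).dropLast ++ [w]).Nodup := by rw [hsplit]; exact hnd
        exact (List.nodup_append'.mp hnd2).2.2 hmem (List.mem_singleton_self w)
      have hother : ∀ v, v ≠ v₀ → v ≠ w →
          (v ∈ (y :: t) ↔ v ∈ (v₀ :: y :: t).dropLast) := by
        intro v hv1 hv2
        constructor
        · intro hv
          have hvp : v ∈ (v₀ :: y :: t).dropLast ++ [w] := by
            rw [hsplit]; exact List.mem_cons_of_mem _ hv
          rcases List.mem_append.mp hvp with h | h
          · exact h
          · exact absurd (List.mem_singleton.mp h) hv2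
        · intro hv
          have hvp : v ∈ (v₀ :: y :: t) := List.mem_of_mem_dropLast hv
          rcases List.mem_cons.mp hvp with h | h
          · exact absurd h hv1
          · exact h
      -- the decremented flow
      set ind : V → V → ℕ := fun u v => if (u, v) ∈ z then 1 else 0 with hinddef
      set f' : V → V → ℕ := fun u v => f u v - ind u v with hf'def
      have hind_le : ∀ u v, ind u v ≤ f u v := by
        intro u v
        by_cases hm : (u, v) ∈ z
        · have h1 : 0 < f u v := hz (u, v) hm
          simp [hinddef, hm]
          omega
        · simp [hinddef, hm]
      have hf'cast : ∀ u v, (f' u v : ℤ) = (f u v : ℤ) - ind u v := by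
        intro u v
        rw [hf'def]
        exact_mod_cast Nat.cast_sub (hind_le u v)
      have hinj_snd := List.inj_on_of_nodup_map (f := Prod.snd) (l := z) (hsnd ▸ htl)
      have hinj_fst := List.inj_on_of_nodup_map (f := Prod.fst) (l := z) (hfst ▸ hdl)
      have hSin : ∀ v, (∑ u, (ind u v : ℤ)) = if v ∈ (y :: t) then 1 else 0 := by
        intro v
        by_cases hv : v ∈ (y :: t)
        · rw [if_pos hv]
          rw [← hsnd] at hv
          obtain ⟨pr, hmem, hb⟩ := List.mem_map.mp hv
          obtain ⟨a', b'⟩ := pr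
          cases hb
          rw [Finset.sum_eq_single a']
          · simp [hinddef, hmem]
          · intro u _ hu
            have hnm : (u, b') ∉ z := fun hcz =>
              hu (congrArg Prod.fst (hinj_snd hcz hmem rfl))
            simp [hinddef, hnm]
          · intro h; exact absurd (Finset.mem_univ a') h
        · rw [if_neg hv]
          refine Finset.sum_eq_zero fun u _ => ?_
          have hnm : (u, v) ∉ z := fun hcz =>
            hv (hsnd ▸ List.mem_map_of_mem (f := Prod.snd) hcz)
          simp [hinddef, hnm]
      have hSout : ∀ v, (∑ x, (ind v x : ℤ)) = if v ∈ (v₀ :: y :: t).dropLast then 1 else 0 := by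
        intro v
        by_cases hv : v ∈ (v₀ :: y :: t).dropLast
        · rw [if_pos hv]
          rw [← hfst] at hv
          obtain ⟨pr, hmem, hb⟩ := List.mem_map.mp hv
          obtain ⟨a', b'⟩ := pr
          cases hb
          rw [Finset.sum_eq_single b']
          · simp [hinddef, hmem]
          · intro x _ hx
            have hnm : (a', x) ∉ z := fun hcz =>
              hx (congrArg Prod.snd (hinj_fst hcz hmem rfl))
            simp [hinddef, hnm]
          · intro h; exact absurd (Finset.mem_univ b') h
        · rw [if_neg hv]
          refine Finset.sum_eq_zero fun x _ => ?_
          have hnm : (v, x) ∉ z := fun hcz =>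
            hv (hfst ▸ List.mem_map_of_mem (f := Prod.fst) hcz)
          simp [hinddef, hnm]
      have hNet : ∀ v, netInflow f' v = netInflow f v
          - (if v ∈ (y :: t) then (1:ℤ) else 0)
          + (if v ∈ (v₀ :: y :: t).dropLast then (1:ℤ) else 0) := by
        intro v
        unfold netInflow
        have e1 : ∑ u, (f' u v : ℤ) = (∑ u, (f u v : ℤ)) - ∑ u, (ind u v : ℤ) := by
          rw [← Finset.sum_sub_distrib]
          exact Finset.sum_congr rfl fun u _ => hf'cast u v
        have e2 : ∑ x, (f' v x : ℤ) = (∑ x, (f v x : ℤ)) - ∑ x, (ind v x : ℤ) := by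
          rw [← Finset.sum_sub_distrib]
          exact Finset.sum_congr rfl fun x _ => hf'cast v x
        rw [e1, e2, hSin, hSout]
        ring
      -- w is a sink with positive demand
      have hnetw : 0 < netInflow f w := by
        have haf : (0:ℤ) < f a w := by exact_mod_cast hz (a, w) haz'
        have hle : (f a w : ℤ) ≤ ∑ u, (f u w : ℤ) :=
          Finset.single_le_sum (f := fun u => (f u w : ℤ)) (fun i _ => by positivity)
            (Finset.mem_univ a)
        have hout0 : ∑ x, (f w x : ℤ) = 0 := by simp [hw]
        unfold netInflow
        rw [hout0]
        linarith
      have hwsnk : w ∈ snk := by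
        by_contra hcon
        rw [hzero w hwv₀ hcon] at hnetw
        exact lt_irrefl _ hnetw
      have hdw : 0 < d w := by
        have := hsnk w hwsnk
        rw [this] at hnetw
        exact_mod_cast hnetw
      set d' : V → ℕ := fun v => if v = w then d v - 1 else d v with hd'def
      -- IH hypotheses
      have hsupp' : ∀ u v, ¬ E u v → f' u v = 0 := by
        intro u v h
        rw [hf'def]
        simp [hsupp u v h]
      have hsrc' : netInflow f' v₀ = -(k : ℤ) := by
        rw [hNet v₀, if_neg hv₀tail, if_pos hv₀dl, hsrc]
        push_cast
        ring
      have hsnk' : ∀ w' ∈ snk, netInflow f' w' = (d' w' : ℤ) := by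
        intro w' hw'
        by_cases hww : w' = w
        · subst hww
          rw [hNet w', if_pos hwtail, if_neg hwdl, hsnk w' hwsnk]
          have e6 : d' w' = d w' - 1 := by simp [hd'def]
          rw [e6, Nat.cast_sub hdw]
          push_cast
          ring
        · have hne₀ : w' ≠ v₀ := fun h => hv₀ (h ▸ hw')
          rw [hNet w', hsnk w' hw', hd'def]
          simp only [if_neg hww]
          have hiff := hother w' hne₀ hww
          by_cases hm : w' ∈ (y :: t)
          · rw [if_pos hm, if_pos (hiff.mp hm)]; ring
          · rw [if_neg hm, if_neg (fun hq => hm (hiff.mpr hq))]; ring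
      have htot' : ∑ v ∈ snk, d' v = k := by
        have e1 : d' w + ∑ v ∈ snk.erase w, d' v = ∑ v ∈ snk, d' v :=
          Finset.add_sum_erase snk d' hwsnk
        have e2 : d w + ∑ v ∈ snk.erase w, d v = ∑ v ∈ snk, d v :=
          Finset.add_sum_erase snk d hwsnk
        have e3 : ∑ v ∈ snk.erase w, d' v = ∑ v ∈ snk.erase w, d v := by
          refine Finset.sum_congr rfl fun v hv => ?_
          rw [hd'def]
          simp [Finset.ne_of_mem_erase hv]
        have e4 : d' w = d w - 1 := by rw [hd'def]; simp
        omega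
      have hzero' : ∀ v, v ≠ v₀ → v ∉ snk → netInflow f' v = 0 := by
        intro v hv1 hv2
        have hvw : v ≠ w := fun h => hv2 (h ▸ hwsnk)
        rw [hNet v, hzero v hv1 hv2]
        have hiff := hother v hv1 hvw
        by_cases hm : v ∈ (y :: t)
        · rw [if_pos hm, if_pos (hiff.mp hm)]; ring
        · rw [if_neg hm, if_neg (fun hq => hm (hiff.mpr hq))]; ring
      obtain ⟨P', hc', hh', hl', hcard', hcnt'⟩ := ih f' d' hsupp' hsrc' hsnk' htot' hzero'
      refine ⟨Fin.cons (v₀ :: y :: t) P', ?_, ?_, ?_, ?_, ?_⟩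
      · intro i
        refine Fin.cases ?_ ?_ i
        · simpa using hc
        · intro j; simpa using hc' j
      · intro i
        refine Fin.cases ?_ ?_ i
        · simp
        · intro j; simpa using hh' j
      · intro i
        refine Fin.cases ?_ ?_ i
        · exact ⟨w, hwsnk, by simpa using hl⟩
        · intro j; simpa using hl' j
      · intro w' hw'
        rw [Finset.card_filter, Fin.sum_univ_succ]
        simp only [Fin.cons_zero, Fin.cons_succ]
        have e5 : (∑ i : Fin k, if (P' i).getLast? = some w' then 1 else 0) = d' w' := by
          rw [← Finset.card_filter]
          exact hcard' w' hw'
        rw [e5, hl]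
        by_cases hww : w' = w
        · subst hww
          rw [if_pos rfl]
          have e6 : d' w' = d w' - 1 := by simp [hd'def]
          omega
        · rw [if_neg (fun h => hww (Option.some_injective V h).symm)]
          have e6 : d' w' = d w' := by simp [hd'def, hww]
          omega
      · intro u v
        rw [Fin.sum_univ_succ]
        simp only [Fin.cons_zero, Fin.cons_succ]
        have hcz : ((v₀ :: y :: t).zip (v₀ :: y :: t).tail).count (u, v) = ind u v := by
          have hzz : (v₀ :: y :: t).zip (v₀ :: y :: t).tail = z := rfl
          rw [hzz]
          by_cases hm : (u, v) ∈ z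
          · have h2 : ind u v = 1 := by simp [hinddef, hm]
            rw [h2, count_eq_ite hzn, if_pos hm]
          · have h2 : ind u v = 0 := by simp [hinddef, hm]
            rw [h2, count_eq_ite hzn, if_neg hm]
        have h5 := hcnt' u v
        have h6 := hind_le u v
        have h7 : f' u v = f u v - ind u v := by rw [hf'def]
        omega
end

/-- Flow decomposition on a DAG. Any nonnegative integer flow on a
finite directed acyclic graph `E` with a single source `v₀` of supply `k`, sinks
`snk` absorbing `d w ≥ 0` units each with total `k`, and zero net inflow
elsewhere, decomposes into `k` directed paths from the source to sinks, with
exactly `d w` paths ending at each sink `w`, and the number of times any edge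
`(u, v)` is used by the paths is at most `f u v`. -/
theorem flow_decomposition_dag {V : Type*} [Fintype V] [DecidableEq V]
    (E : V → V → Prop) [DecidableRel E]
    (hacyc : ∀ v, ¬ Relation.TransGen E v v)
    (f : V → V → ℕ) (hsupp : ∀ u v, ¬ E u v → f u v = 0)
    (v₀ : V) (snk : Finset V) (k : ℕ) (d : V → ℕ)
    (hv₀ : v₀ ∉ snk)
    (hsrc : netInflow f v₀ = -(k : ℤ))
    (hsnk : ∀ w ∈ snk, netInflow f w = (d w : ℤ))
    (htot : ∑ w ∈ snk, d w = k)
    (hzero : ∀ v, v ≠ v₀ → v ∉ snk → netInflow f v = 0) :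
    ∃ P : Fin k → List V,
      (∀ i, (P i).Chain' E) ∧
      (∀ i, (P i).head? = some v₀) ∧
      (∀ i, ∃ w ∈ snk, (P i).getLast? = some w) ∧
      (∀ w ∈ snk, (Finset.univ.filter fun i => (P i).getLast? = some w).card = d w) ∧
      (∀ u v, (∑ i, ((P i).zip (P i).tail).count (u, v)) ≤ f u v) :=
  mainAux hacyc v₀ snk hv₀ k f d hsupp hsrc hsnk htot hzero
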